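/- In any bicategory with binary bicategorical coproducts and bicategorical pushouts, bicategorical coequalizers exist. Specifically, the bicategorical coequalizer of a parallel pair f, g : A ⇉ B is given by the bicategorical pushout of the morphism (f, g) : A ⊔ A → B induced by f and g, and the codiagonal morphism ∇ : A ⊔ A → A induced by the identity on both copies. -/
import Mathlib


/-!
Statement 7: In any bicategory with binary bicategorical coproducts and bicategorical
pushouts, bicategorical coequalizers exist; specifically, the bicategorical coequalizer
of `f, g : a ⟶ b` is the `b`-leg of the bicategorical pushout of the morphism
`(f, g) : a ⊔ a ⟶ b` (determined by `ι₁ ≫ (f,g) ≅ f`, `ι₂ ≫ (f,g) ≅ g`) along the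
codiagonal `∇ : a ⊔ a ⟶ a` (determined by `ι₁ ≫ ∇ ≅ 𝟙 a`, `ι₂ ≫ ∇ ≅ 𝟙 a`).
-/

open CategoryTheory Bicategory

universe w v u

variable {B : Type u} [Bicategory.{w, v} B]

/-- `(s, ia, ib)` is a bicategorical coproduct of `a` and `b`: for every `t`,
precomposition induces an equivalence `Hom(s,t) ≃ Hom(a,t) × Hom(b,t)`. -/
def IsBicatCoproduct {a b s : B} (ia : a ⟶ s) (ib : b ⟶ s) : Prop :=
  ∀ t : B,
    (∀ (u : a ⟶ t) (v : b ⟶ t),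
      ∃ k : s ⟶ t, Nonempty (ia ≫ k ≅ u) ∧ Nonempty (ib ≫ k ≅ v)) ∧
    (∀ (k l : s ⟶ t) (θu : ia ≫ k ⟶ ia ≫ l) (θv : ib ≫ k ⟶ ib ≫ l),
      ∃! θ : k ⟶ l, ia ◁ θ = θu ∧ ib ◁ θ = θv)

/-- `(p, w)` is a bicategorical coequalizer of `f, g : a ⟶ b`: for every `t`,
precomposition induces an equivalence between `Hom(c,t)` and pairs
`(q : b ⟶ t, β : f ≫ q ≅ g ≫ q)`. -/
def IsBicatCoequalizer {a b c : B} (f g : a ⟶ b) (p : b ⟶ c) (w : f ≫ p ≅ g ≫ p) : Prop :=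
  ∀ t : B,
    (∀ (q : b ⟶ t) (β : f ≫ q ≅ g ≫ q),
      ∃ (k : c ⟶ t) (e : p ≫ k ≅ q),
        β.hom = f ◁ e.inv ≫ (α_ f p k).inv ≫ w.hom ▷ k ≫ (α_ g p k).hom ≫ g ◁ e.hom) ∧
    (∀ (k l : c ⟶ t) (θ : p ≫ k ⟶ p ≫ l),
      ((α_ f p k).inv ≫ w.hom ▷ k ≫ (α_ g p k).hom) ≫ g ◁ θ =
        f ◁ θ ≫ ((α_ f p l).inv ≫ w.hom ▷ l ≫ (α_ g p l).hom) →
      ∃! π : k ⟶ l, p ◁ π = θ)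

/-- `(ia, ib, w)` is a bicategorical pushout of `f : c ⟶ a` and `g : c ⟶ b`: for every
`t`, precomposition induces an equivalence between `Hom(s,t)` and the bicategorical
pullback `Hom(a,t) ×_{Hom(c,t)} Hom(b,t)`, whose objects are triples
`(u, v, β : f ≫ u ≅ g ≫ v)`. -/
def IsBicatPushout {a b c s : B} (f : c ⟶ a) (g : c ⟶ b) (ia : a ⟶ s) (ib : b ⟶ s)
    (w : f ≫ ia ≅ g ≫ ib) : Prop :=
  ∀ t : B,
    (∀ (u : a ⟶ t) (v : b ⟶ t) (β : f ≫ u ≅ g ≫ v),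
      ∃ (k : s ⟶ t) (eu : ia ≫ k ≅ u) (ev : ib ≫ k ≅ v),
        β.hom = f ◁ eu.inv ≫ (α_ f ia k).inv ≫ w.hom ▷ k ≫ (α_ g ib k).hom ≫ g ◁ ev.hom) ∧
    (∀ (k l : s ⟶ t) (θu : ia ≫ k ⟶ ia ≫ l) (θv : ib ≫ k ⟶ ib ≫ l),
      ((α_ f ia k).inv ≫ w.hom ▷ k ≫ (α_ g ib k).hom) ≫ g ◁ θv =
        f ◁ θu ≫ ((α_ f ia l).inv ≫ w.hom ▷ l ≫ (α_ g ib l).hom) →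
      ∃! θ : k ⟶ l, ia ◁ θ = θu ∧ ib ◁ θ = θv)

/-- a bicategory with binary bicategorical coproducts and bicategorical
pushouts has bicategorical coequalizers, given by pushing out `(f,g) : a ⊔ a ⟶ b`
along the codiagonal `∇ : a ⊔ a ⟶ a`. -/


theorem myL1 {a s t : B} (i : a ⟶ s) (covd : s ⟶ a) (ec : i ≫ covd ≅ 𝟙 a)
    {X Y : a ⟶ t} (ξ : X ⟶ Y) :
    i ◁ (covd ◁ ξ) =
      (α_ i covd X).inv ≫ ec.hom ▷ X ≫ (λ_ X).hom ≫ ξ ≫ (λ_ Y).inv ≫ ec.inv ▷ Y ≫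
        (α_ i covd Y).hom := by
  have h : ec.hom ▷ X ≫ (λ_ X).hom ≫ ξ ≫ (λ_ Y).inv ≫ ec.inv ▷ Y = (i ≫ covd) ◁ ξ := by
    rw [← leftUnitor_naturality_assoc, ← whisker_exchange_assoc]; simp
  calc i ◁ (covd ◁ ξ)
      = (α_ i covd X).inv ≫ ((i ≫ covd) ◁ ξ) ≫ (α_ i covd Y).hom := by
        rw [associator_naturality_right]; simp
    _ = _ := by rw [← h]; simp only [Category.assoc]

def myPhi {a s b P : B} (i : a ⟶ s) (covd : s ⟶ a) (k : s ⟶ b) (u : b ⟶ P) (w : a ⟶ P)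
    (ω : k ≫ u ≅ covd ≫ w) (ec : i ≫ covd ≅ 𝟙 a) (f' : a ⟶ b) (ef' : i ≫ k ≅ f') :
    f' ≫ u ≅ w where
  hom := ef'.inv ▷ u ≫ (α_ i k u).hom ≫ i ◁ ω.hom ≫ (α_ i covd w).inv ≫ ec.hom ▷ w ≫ (λ_ w).hom
  inv := (λ_ w).inv ≫ ec.inv ▷ w ≫ (α_ i covd w).hom ≫ i ◁ ω.inv ≫ (α_ i k u).inv ≫ ef'.hom ▷ u
  hom_inv_id := by simp
  inv_hom_id := by simp

theorem mySA {a s b P t : B} (i : a ⟶ s) (covd : s ⟶ a) (k : s ⟶ b) (u : b ⟶ P) (w : a ⟶ P)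
    (ω : k ≫ u ≅ covd ≫ w) (ec : i ≫ covd ≅ 𝟙 a) (f' : a ⟶ b) (ef' : i ≫ k ≅ f')
    (q : b ⟶ t) (h : P ⟶ t) (eu : u ≫ h ≅ q) :
    (λ_ (w ≫ h)).inv ≫ ec.inv ▷ (w ≫ h) ≫ (α_ i covd (w ≫ h)).hom ≫
      i ◁ ((α_ covd w h).inv ≫ ω.inv ▷ h ≫ (α_ k u h).hom ≫ k ◁ eu.hom) ≫
      (α_ i k q).inv ≫ ef'.hom ▷ q
    = (myPhi i covd k u w ω ec f' ef').inv ▷ h ≫ (α_ f' u h).hom ≫ f' ◁ eu.hom := by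
  simp only [Bicategory.whiskerLeft_comp, Category.assoc]
  rw [associator_inv_naturality_right_assoc, whisker_exchange]
  simp only [myPhi]
  bicategory

theorem myEX {a s b P t : B} (i : a ⟶ s) (covd : s ⟶ a) (k : s ⟶ b) (u : b ⟶ P) (w : a ⟶ P)
    (ω : k ≫ u ≅ covd ≫ w) (ec : i ≫ covd ≅ 𝟙 a) (f' : a ⟶ b) (ef' : i ≫ k ≅ f')
    (q : b ⟶ t) (h : P ⟶ t) (eu : u ≫ h ≅ q) {r : a ⟶ t} (ev : w ≫ h ≅ r)
    (ρ : f' ≫ q ⟶ r)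
    (hi : i ◁ (k ◁ eu.inv ≫ (α_ k u h).inv ≫ ω.hom ▷ h ≫ (α_ covd w h).hom ≫ covd ◁ ev.hom)
      = ((α_ i k q).inv ≫ ef'.hom ▷ q) ≫ ρ ≫ ((λ_ r).inv ≫ ec.inv ▷ r ≫ (α_ i covd r).hom)) :
    ev.hom = (myPhi i covd k u w ω ec f' ef').inv ▷ h ≫ (α_ f' u h).hom ≫ f' ◁ eu.hom ≫ ρ := by
  set Θ : (i ≫ k ≫ q) ≅ w ≫ h :=
    whiskerLeftIso i (whiskerLeftIso k eu.symm ≪≫ (α_ k u h).symm ≪≫ whiskerRightIso ω h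
      ≪≫ α_ covd w h) ≪≫ (α_ i covd (w ≫ h)).symm ≪≫ whiskerRightIso ec (w ≫ h)
      ≪≫ λ_ (w ≫ h) with hΘ
  have key : Θ.hom ≫ ev.hom = (α_ i k q).inv ≫ ef'.hom ▷ q ≫ ρ := by
    have hi2 := congrArg (· ≫ ((α_ i covd r).inv ≫ ec.hom ▷ r ≫ (λ_ r).hom)) hi
    simp only [Bicategory.whiskerLeft_comp, Category.assoc] at hi2
    rw [myL1 i covd ec ev.hom] at hi2
    simp only [Category.assoc, Iso.hom_inv_id, Iso.hom_inv_id_assoc, Category.comp_id,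
      inv_hom_whiskerRight, inv_hom_whiskerRight_assoc, Iso.inv_hom_id, Iso.inv_hom_id_assoc] at hi2
    simp only [hΘ, Iso.trans_hom, whiskerLeftIso_hom, Iso.symm_hom, whiskerRightIso_hom,
      Bicategory.whiskerLeft_comp, Category.assoc]
    exact hi2
  have key2 : ev.hom = Θ.inv ≫ (α_ i k q).inv ≫ ef'.hom ▷ q ≫ ρ := by
    calc ev.hom = Θ.inv ≫ Θ.hom ≫ ev.hom := by simp
      _ = _ := by rw [key]
  rw [key2]
  have hsa := mySA i covd k u w ω ec f' ef' q h eu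
  simp only [hΘ, Iso.trans_inv, whiskerLeftIso_inv, Iso.symm_inv, whiskerRightIso_inv,
    Bicategory.whiskerLeft_comp, Category.assoc] at hsa ⊢
  simp only [← Category.assoc] at hsa ⊢
  rw [hsa]

theorem mySB {a s b P t : B} (i : a ⟶ s) (covd : s ⟶ a) (k : s ⟶ b) (u : b ⟶ P) (w : a ⟶ P)
    (ω : k ≫ u ≅ covd ≫ w) (ec : i ≫ covd ≅ 𝟙 a) (f' : a ⟶ b) (ef' : i ≫ k ≅ f')
    (k' l : P ⟶ t) (θ : u ≫ k' ⟶ u ≫ l) :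
    i ◁ ((((α_ k u k').inv ≫ ω.hom ▷ k' ≫ (α_ covd w k').hom) ≫
      covd ◁ ((myPhi i covd k u w ω ec f' ef').inv ▷ k' ≫ (α_ f' u k').hom ≫ f' ◁ θ ≫
        (α_ f' u l).inv ≫ (myPhi i covd k u w ω ec f' ef').hom ▷ l)))
    = i ◁ (k ◁ θ ≫ ((α_ k u l).inv ≫ ω.hom ▷ l ≫ (α_ covd w l).hom)) := by
  set Φ := myPhi i covd k u w ω ec f' ef' with hΦ
  set Mk : i ≫ k ≫ u ≫ k' ≅ w ≫ k' :=
    whiskerLeftIso i ((α_ k u k').symm ≪≫ whiskerRightIso ω k' ≪≫ α_ covd w k')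
      ≪≫ (α_ i covd (w ≫ k')).symm ≪≫ whiskerRightIso ec (w ≫ k') ≪≫ λ_ (w ≫ k') with hMk
  set Ml : i ≫ k ≫ u ≫ l ≅ w ≫ l :=
    whiskerLeftIso i ((α_ k u l).symm ≪≫ whiskerRightIso ω l ≪≫ α_ covd w l)
      ≪≫ (α_ i covd (w ≫ l)).symm ≪≫ whiskerRightIso ec (w ≫ l) ≪≫ λ_ (w ≫ l) with hMl
  have SAk := mySA i covd k u w ω ec f' ef' (u ≫ k') k' (Iso.refl (u ≫ k'))
  have SAl := mySA i covd k u w ω ec f' ef' (u ≫ l) l (Iso.refl (u ≫ l))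
  have hk : Mk.inv ≫ (α_ i k (u ≫ k')).inv ≫ ef'.hom ▷ (u ≫ k')
      = Φ.inv ▷ k' ≫ (α_ f' u k').hom := by
    simp only [hΦ] at SAk ⊢
    simp only [hMk, Iso.trans_inv, Iso.symm_inv, whiskerLeftIso, whiskerRightIso,
      Iso.trans_hom, Iso.symm_hom, Bicategory.whiskerLeft_comp, Category.assoc]
    simpa using SAk
  have hl : Ml.inv ≫ (α_ i k (u ≫ l)).inv ≫ ef'.hom ▷ (u ≫ l)
      = Φ.inv ▷ l ≫ (α_ f' u l).hom := by
    simp only [hΦ] at SAl ⊢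
    simp only [hMl, Iso.trans_inv, Iso.symm_inv, whiskerLeftIso, whiskerRightIso,
      Iso.trans_hom, Iso.symm_hom, Bicategory.whiskerLeft_comp, Category.assoc]
    simpa using SAl
  have hlinv : (α_ f' u l).inv ≫ Φ.hom ▷ l
      = ef'.inv ▷ (u ≫ l) ≫ (α_ i k (u ≫ l)).hom ≫ Ml.hom := by
    have hXY : Ml.symm ≪≫ (α_ i k (u ≫ l)).symm ≪≫ whiskerRightIso ef' (u ≫ l)
        = (whiskerRightIso Φ l).symm ≪≫ α_ f' u l := by
      apply Iso.ext
      simpa [whiskerRightIso] using hl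
    have := congrArg Iso.inv hXY
    simpa [whiskerRightIso] using this.symm
  -- decompose i ◁ k ◁ θ
  have hth : i ◁ k ◁ θ = (α_ i k (u ≫ k')).inv ≫ ef'.hom ▷ (u ≫ k') ≫ f' ◁ θ ≫
      ef'.inv ▷ (u ≫ l) ≫ (α_ i k (u ≫ l)).hom := by
    rw [← whisker_exchange_assoc, hom_inv_whiskerRight_assoc]
    simp
  rw [Bicategory.whiskerLeft_comp, Bicategory.whiskerLeft_comp, myL1 i covd ec]
  simp only [Bicategory.whiskerLeft_comp, Category.assoc]
  have hMkhom : Mk.hom = i ◁ (α_ k u k').inv ≫ i ◁ (ω.hom ▷ k') ≫ i ◁ (α_ covd w k').hom ≫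
      (α_ i covd (w ≫ k')).inv ≫ ec.hom ▷ (w ≫ k') ≫ (λ_ (w ≫ k')).hom := by
    simp [hMk, whiskerLeftIso, whiskerRightIso]
  have hMlhom : Ml.hom = i ◁ (α_ k u l).inv ≫ i ◁ (ω.hom ▷ l) ≫ i ◁ (α_ covd w l).hom ≫
      (α_ i covd (w ≫ l)).inv ≫ ec.hom ▷ (w ≫ l) ≫ (λ_ (w ≫ l)).hom := by
    simp [hMl, whiskerLeftIso, whiskerRightIso]
  calc i ◁ (α_ k u k').inv ≫ i ◁ (ω.hom ▷ k') ≫ i ◁ (α_ covd w k').hom ≫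
        (α_ i covd (w ≫ k')).inv ≫ ec.hom ▷ (w ≫ k') ≫ (λ_ (w ≫ k')).hom ≫
        Φ.inv ▷ k' ≫ (α_ f' u k').hom ≫ f' ◁ θ ≫ (α_ f' u l).inv ≫ Φ.hom ▷ l ≫
        (λ_ (w ≫ l)).inv ≫ ec.inv ▷ (w ≫ l) ≫ (α_ i covd (w ≫ l)).hom
      = Mk.hom ≫ (Φ.inv ▷ k' ≫ (α_ f' u k').hom) ≫ f' ◁ θ ≫
          ((α_ f' u l).inv ≫ Φ.hom ▷ l) ≫
          (λ_ (w ≫ l)).inv ≫ ec.inv ▷ (w ≫ l) ≫ (α_ i covd (w ≫ l)).hom := by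
        rw [hMkhom]; simp only [Category.assoc]
    _ = Mk.hom ≫ (Mk.inv ≫ (α_ i k (u ≫ k')).inv ≫ ef'.hom ▷ (u ≫ k')) ≫ f' ◁ θ ≫
          (ef'.inv ▷ (u ≫ l) ≫ (α_ i k (u ≫ l)).hom ≫ Ml.hom) ≫
          (λ_ (w ≫ l)).inv ≫ ec.inv ▷ (w ≫ l) ≫ (α_ i covd (w ≫ l)).hom := by
        rw [hk, hlinv]
    _ = ((α_ i k (u ≫ k')).inv ≫ ef'.hom ▷ (u ≫ k') ≫ f' ◁ θ ≫
          ef'.inv ▷ (u ≫ l) ≫ (α_ i k (u ≫ l)).hom) ≫ Ml.hom ≫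
          (λ_ (w ≫ l)).inv ≫ ec.inv ▷ (w ≫ l) ≫ (α_ i covd (w ≫ l)).hom := by
        simp only [Iso.hom_inv_id_assoc, Category.assoc]
    _ = i ◁ k ◁ θ ≫ i ◁ (α_ k u l).inv ≫ i ◁ (ω.hom ▷ l) ≫ i ◁ (α_ covd w l).hom := by
        rw [← hth, hMlhom]
        simp only [Category.assoc, Iso.hom_inv_id_assoc, hom_inv_whiskerRight_assoc,
          Iso.inv_hom_id, Iso.inv_hom_id_assoc, Category.comp_id]
theorem coprod_ext {a b s : B} {ia : a ⟶ s} {ib : b ⟶ s} (hcp : IsBicatCoproduct ia ib)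
    {t : B} {m m' : s ⟶ t} {ξ ξ' : m ⟶ m'}
    (h1 : ia ◁ ξ = ia ◁ ξ') (h2 : ib ◁ ξ = ib ◁ ξ') : ξ = ξ' := by
  obtain ⟨θ, -, uniq⟩ := (hcp t).2 m m' (ia ◁ ξ) (ib ◁ ξ)
  exact (uniq ξ ⟨rfl, rfl⟩).trans (uniq ξ' ⟨h1.symm, h2.symm⟩).symm

theorem coprod_lift_iso {a b s : B} {ia : a ⟶ s} {ib : b ⟶ s} (hcp : IsBicatCoproduct ia ib)
    {t : B} {m m' : s ⟶ t} (φ : ia ≫ m ≅ ia ≫ m') (ψ : ib ≫ m ≅ ib ≫ m') :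
    ∃ Θ : m ≅ m', ia ◁ Θ.hom = φ.hom ∧ ib ◁ Θ.hom = ψ.hom := by
  obtain ⟨θ, ⟨ha, hb⟩, -⟩ := (hcp t).2 m m' φ.hom ψ.hom
  obtain ⟨θ', ⟨ha', hb'⟩, -⟩ := (hcp t).2 m' m φ.inv ψ.inv
  refine ⟨⟨θ, θ', ?_, ?_⟩, ha, hb⟩
  · exact coprod_ext hcp (by simp [ha, ha']) (by simp [hb, hb'])
  · exact coprod_ext hcp (by simp [ha, ha']) (by simp [hb, hb'])

theorem aux_main {a b s P : B} (f g : a ⟶ b) (i₁ i₂ : a ⟶ s) (k : s ⟶ b) (covd : s ⟶ a)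
    (u : b ⟶ P) (w : a ⟶ P) (ω : k ≫ u ≅ covd ≫ w)
    (hcp : IsBicatCoproduct i₁ i₂)
    (ef : i₁ ≫ k ≅ f) (eg : i₂ ≫ k ≅ g) (e₁ : i₁ ≫ covd ≅ 𝟙 a) (e₂ : i₂ ≫ covd ≅ 𝟙 a)
    (hpo : IsBicatPushout k covd u w ω) :
    ∃ e : f ≫ u ≅ g ≫ u, IsBicatCoequalizer f g u e := by
  refine ⟨myPhi i₁ covd k u w ω e₁ f ef ≪≫ (myPhi i₂ covd k u w ω e₂ g eg).symm,
    fun t => ⟨?_, ?_⟩⟩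
  · -- existence part
    intro q β
    obtain ⟨β', hβ1, hβ2⟩ := coprod_lift_iso hcp
      (((α_ i₁ k q).symm ≪≫ whiskerRightIso ef q) ≪≫
        ((α_ i₁ covd (f ≫ q)).symm ≪≫ whiskerRightIso e₁ (f ≫ q) ≪≫ λ_ (f ≫ q)).symm)
      (((α_ i₂ k q).symm ≪≫ whiskerRightIso eg q) ≪≫ β.symm ≪≫
        ((α_ i₂ covd (f ≫ q)).symm ≪≫ whiskerRightIso e₂ (f ≫ q) ≪≫ λ_ (f ≫ q)).symm)
    obtain ⟨h, eu, ev, hpush⟩ := (hpo t).1 q (f ≫ q) β'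
    refine ⟨h, eu, ?_⟩
    have hi1 : i₁ ◁ (k ◁ eu.inv ≫ (α_ k u h).inv ≫ ω.hom ▷ h ≫ (α_ covd w h).hom ≫
        covd ◁ ev.hom)
        = ((α_ i₁ k q).inv ≫ ef.hom ▷ q) ≫ 𝟙 (f ≫ q) ≫
          ((λ_ (f ≫ q)).inv ≫ e₁.inv ▷ (f ≫ q) ≫ (α_ i₁ covd (f ≫ q)).hom) := by
      rw [← hpush, hβ1]; simp [whiskerRightIso]
    have hi2 : i₂ ◁ (k ◁ eu.inv ≫ (α_ k u h).inv ≫ ω.hom ▷ h ≫ (α_ covd w h).hom ≫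
        covd ◁ ev.hom)
        = ((α_ i₂ k q).inv ≫ eg.hom ▷ q) ≫ β.inv ≫
          ((λ_ (f ≫ q)).inv ≫ e₂.inv ▷ (f ≫ q) ≫ (α_ i₂ covd (f ≫ q)).hom) := by
      rw [← hpush, hβ2]; simp [whiskerRightIso]
    have hev1 := myEX i₁ covd k u w ω e₁ f ef q h eu ev (𝟙 (f ≫ q)) hi1
    have hev2 := myEX i₂ covd k u w ω e₂ g eg q h eu ev β.inv hi2
    have hev : ev = (whiskerRightIso (myPhi i₁ covd k u w ω e₁ f ef) h).symm ≪≫ α_ f u h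
        ≪≫ whiskerLeftIso f eu := by
      apply Iso.ext
      simpa [whiskerRightIso, whiskerLeftIso] using hev1
    have h2' : (myPhi i₂ covd k u w ω e₂ g eg).inv ▷ h ≫ (α_ g u h).hom ≫ g ◁ eu.hom
        = ev.hom ≫ β.hom := by
      rw [hev2]; simp
    simp only [Iso.trans_hom, Iso.symm_hom, comp_whiskerRight, Category.assoc]
    rw [h2', hev]
    simp [whiskerRightIso, whiskerLeftIso]
  · -- uniqueness part
    intro k' l θ H
    set Φf := myPhi i₁ covd k u w ω e₁ f ef with hΦf
    set Φg := myPhi i₂ covd k u w ω e₂ g eg with hΦg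
    set θw := Φf.inv ▷ k' ≫ (α_ f u k').hom ≫ f ◁ θ ≫ (α_ f u l).inv ≫ Φf.hom ▷ l with hθw
    have H' := H
    simp only [Iso.trans_hom, Iso.symm_hom, comp_whiskerRight, Category.assoc] at H'
    have hTS : θw = Φg.inv ▷ k' ≫ (α_ g u k').hom ≫ g ◁ θ ≫ (α_ g u l).inv ≫ Φg.hom ▷ l := by
      calc θw = Φf.inv ▷ k' ≫ (α_ f u k').hom ≫ (f ◁ θ ≫ (α_ f u l).inv ≫ Φf.hom ▷ l ≫
            Φg.inv ▷ l ≫ (α_ g u l).hom) ≫ (α_ g u l).inv ≫ Φg.hom ▷ l := by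
            rw [hθw]; simp
        _ = Φf.inv ▷ k' ≫ (α_ f u k').hom ≫ ((α_ f u k').inv ≫ Φf.hom ▷ k' ≫ Φg.inv ▷ k' ≫
            (α_ g u k').hom ≫ g ◁ θ) ≫ (α_ g u l).inv ≫ Φg.hom ▷ l := by rw [H']
        _ = _ := by simp
    have compat : ((α_ k u k').inv ≫ ω.hom ▷ k' ≫ (α_ covd w k').hom) ≫ covd ◁ θw
        = k ◁ θ ≫ ((α_ k u l).inv ≫ ω.hom ▷ l ≫ (α_ covd w l).hom) := by
      apply coprod_ext hcp
      · rw [hθw, hΦf]; exact mySB i₁ covd k u w ω e₁ f ef k' l θ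
      · rw [hTS, hΦg]; exact mySB i₂ covd k u w ω e₂ g eg k' l θ
    obtain ⟨π, ⟨hπu, hπw⟩, huniq⟩ := (hpo t).2 k' l θ θw compat
    refine ⟨π, hπu, fun π' hπ' => huniq π' ⟨hπ', ?_⟩⟩
    have hwθ : θw = w ◁ π' := by
      rw [hθw, ← hπ', associator_inv_naturality_right_assoc, Iso.hom_inv_id_assoc,
        whisker_exchange]
      simp
    exact hwθ.symm

theorem bicat_coequalizer_of_coproducts_and_pushouts
    (hcoprod : ∀ a b : B, ∃ (s : B) (ia : a ⟶ s) (ib : b ⟶ s), IsBicatCoproduct ia ib)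
    (hpush : ∀ {x y z : B} (f : x ⟶ y) (g : x ⟶ z),
      ∃ (s : B) (iy : y ⟶ s) (iz : z ⟶ s) (w : f ≫ iy ≅ g ≫ iz),
        IsBicatPushout f g iy iz w) :
    -- bicategorical coequalizers exist:
    (∀ {a b : B} (f g : a ⟶ b),
      ∃ (c : B) (p : b ⟶ c) (w : f ≫ p ≅ g ≫ p), IsBicatCoequalizer f g p w) ∧
    -- specifically: given a coproduct `a ⊔ a`, a morphism `(f,g)`, a codiagonal `∇`
    -- and a pushout of `(f,g)` along `∇`, the leg from `b` is a coequalizer of `f, g`: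
    (∀ {a b s P : B} (f g : a ⟶ b) (i₁ i₂ : a ⟶ s) (k : s ⟶ b) (covd : s ⟶ a)
      (u : b ⟶ P) (w : a ⟶ P) (ω : k ≫ u ≅ covd ≫ w),
      IsBicatCoproduct i₁ i₂ →
      Nonempty (i₁ ≫ k ≅ f) → Nonempty (i₂ ≫ k ≅ g) →
      Nonempty (i₁ ≫ covd ≅ 𝟙 a) → Nonempty (i₂ ≫ covd ≅ 𝟙 a) →
      IsBicatPushout k covd u w ω →
      ∃ e : f ≫ u ≅ g ≫ u, IsBicatCoequalizer f g u e) := by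
  constructor
  · intro a b f g
    obtain ⟨s, i₁, i₂, hcp⟩ := hcoprod a a
    obtain ⟨k, ⟨ef⟩, ⟨eg⟩⟩ := (hcp b).1 f g
    obtain ⟨covd, ⟨e₁⟩, ⟨e₂⟩⟩ := (hcp a).1 (𝟙 a) (𝟙 a)
    obtain ⟨P, u, w, ω, hpo⟩ := hpush k covd
    obtain ⟨e, hco⟩ := aux_main f g i₁ i₂ k covd u w ω hcp ef eg e₁ e₂ hpo
    exact ⟨P, u, e, hco⟩
  · intro a b s P f g i₁ i₂ k covd u w ω hcp hf hg h1 h2 hpo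
    obtain ⟨ef⟩ := hf
    obtain ⟨eg⟩ := hg
    obtain ⟨e₁⟩ := h1
    obtain ⟨e₂⟩ := h2
    exact aux_main f g i₁ i₂ k covd u w ω hcp ef eg e₁ e₂ hpo
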